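/- Let k be a field of characteristic zero, V a k-vector space, and R, r : V⊗V → V⊗V skew-symmetric linear maps. Define bilinear maps D_id, D_(12) : V×V → V⊗V by D_id(a,b) := r(a⊗b) and D_(12)(a,b) := R(a⊗b), and for a,b,c ∈ V set T1 := D_(12)(a, D_id'(b,c))⊗D_id''(b,c), T2 := (13)·(D_id'(c,a)⊗D_(12)(b, D_id''(c,a))), T3 := (132)·(D_id(c, D_(12)'(a,b))⊗D_(12)''(a,b)), T4 := (23)·(D_(12)'(a,b)⊗D_id(c, D_(12)''(a,b))), all elements of V^⊗3. Then T1 + T2 + T3 + T4 = (R^12∘(r^13 + r^23) − (r^13 + r^23)∘R^12)(a⊗b⊗c) for all a,b,c ∈ V. In particular, T1+T2+T3+T4 = 0 for all a,b,c ∈ V if and only if [R^12, r^13 + r^23] = 0 as linear maps on V^⊗3. -/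
import Mathlib


open TensorProduct

noncomputable section

namespace YB

variable (k : Type*) [Field k] (V : Type*) [AddCommGroup V] [Module k V]

/-- The flip of `V ⊗ V`. -/
def tauV : (V ⊗[k] V) →ₗ[k] (V ⊗[k] V) := (TensorProduct.comm k V V).toLinearMap

/-- `ρ¹² = ρ ⊗ id` on `V^⊗3`. -/
def e12 (ρ : (V ⊗[k] V) →ₗ[k] (V ⊗[k] V)) :
    (V ⊗[k] (V ⊗[k] V)) →ₗ[k] (V ⊗[k] (V ⊗[k] V)) :=
  (TensorProduct.assoc k V V V).toLinearMap
    ∘ₗ TensorProduct.map ρ LinearMap.id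
    ∘ₗ (TensorProduct.assoc k V V V).symm.toLinearMap

/-- `ρ²³ = id ⊗ ρ` on `V^⊗3`. -/
def e23 (ρ : (V ⊗[k] V) →ₗ[k] (V ⊗[k] V)) :
    (V ⊗[k] (V ⊗[k] V)) →ₗ[k] (V ⊗[k] (V ⊗[k] V)) :=
  TensorProduct.map LinearMap.id ρ

/-- `ρ¹³ = (id ⊗ τ) ∘ ρ¹² ∘ (id ⊗ τ)` on `V^⊗3`. -/
def e13 (ρ : (V ⊗[k] V) →ₗ[k] (V ⊗[k] V)) :
    (V ⊗[k] (V ⊗[k] V)) →ₗ[k] (V ⊗[k] (V ⊗[k] V)) :=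
  TensorProduct.map LinearMap.id (tauV k V)
    ∘ₗ e12 k V ρ
    ∘ₗ TensorProduct.map LinearMap.id (tauV k V)

/-- `ρ` is skew-symmetric: `τ ∘ ρ ∘ τ = -ρ`. -/
def SkewSymmetric (ρ : (V ⊗[k] V) →ₗ[k] (V ⊗[k] V)) : Prop :=
  tauV k V ∘ₗ ρ ∘ₗ tauV k V = -ρ

/-- `(12)·(x⊗y⊗z) = y⊗x⊗z`. -/
def q12 : (V ⊗[k] (V ⊗[k] V)) →ₗ[k] (V ⊗[k] (V ⊗[k] V)) :=
  (TensorProduct.assoc k V V V).toLinearMap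
    ∘ₗ TensorProduct.map (tauV k V) LinearMap.id
    ∘ₗ (TensorProduct.assoc k V V V).symm.toLinearMap

/-- `(23)·(x⊗y⊗z) = x⊗z⊗y`. -/
def q23 : (V ⊗[k] (V ⊗[k] V)) →ₗ[k] (V ⊗[k] (V ⊗[k] V)) :=
  TensorProduct.map LinearMap.id (tauV k V)

/-- `(13)·(x⊗y⊗z) = z⊗y⊗x`. -/
def q13 : (V ⊗[k] (V ⊗[k] V)) →ₗ[k] (V ⊗[k] (V ⊗[k] V)) :=
  q12 k V ∘ₗ q23 k V ∘ₗ q12 k V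

/-- `(132)·(x⊗y⊗z) = y⊗z⊗x`. -/
def q132 : (V ⊗[k] (V ⊗[k] V)) →ₗ[k] (V ⊗[k] (V ⊗[k] V)) :=
  (TensorProduct.assoc k V V V).toLinearMap ∘ₗ (TensorProduct.comm k V (V ⊗[k] V)).toLinearMap

/-- For a bilinear map `D : V × V → V ⊗ V` and `a ∈ V`, the map
`x ⊗ y ↦ D(a,x) ⊗ y`, used to form `D(a, D'(b,c)) ⊗ D''(b,c)`. -/
def applyLeft (D : V →ₗ[k] (V →ₗ[k] (V ⊗[k] V))) (a : V) :
    (V ⊗[k] V) →ₗ[k] (V ⊗[k] (V ⊗[k] V)) :=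
  (TensorProduct.assoc k V V V).toLinearMap ∘ₗ TensorProduct.map (D a) LinearMap.id

/-- For a bilinear map `D` and `a ∈ V`, the map `x ⊗ y ↦ x ⊗ D(a,y)`,
used to form `D'(b,c) ⊗ D(a, D''(b,c))`. -/
def applyRight (D : V →ₗ[k] (V →ₗ[k] (V ⊗[k] V))) (a : V) :
    (V ⊗[k] V) →ₗ[k] (V ⊗[k] (V ⊗[k] V)) :=
  TensorProduct.map LinearMap.id (D a)

end YB

open YB

section Aux

variable (k : Type*) [Field k] (V : Type*) [AddCommGroup V] [Module k V]

lemma tau_tmul (x y : V) : tauV k V (x ⊗ₜ[k] y) = y ⊗ₜ[k] x := rfl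

lemma tau_tau (w : V ⊗[k] V) : tauV k V (tauV k V w) = w := by
  induction w using TensorProduct.induction_on with
  | zero => simp
  | tmul x y => rfl
  | add w1 w2 h1 h2 => simp [h1, h2]

lemma skew_apply {ρ : (V ⊗[k] V) →ₗ[k] (V ⊗[k] V)} (h : SkewSymmetric k V ρ)
    (u : V ⊗[k] V) : ρ (tauV k V u) = -(tauV k V (ρ u)) := by
  have h1 := LinearMap.congr_fun h u
  simp only [LinearMap.comp_apply, LinearMap.neg_apply] at h1
  have h2 := congrArg (tauV k V) h1
  simpa [tau_tau] using h2

lemma e23_tmul (ρ : (V ⊗[k] V) →ₗ[k] (V ⊗[k] V)) (a b c : V) :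
    e23 k V ρ (a ⊗ₜ[k] (b ⊗ₜ[k] c)) = a ⊗ₜ[k] ρ (b ⊗ₜ[k] c) := by
  simp [e23]

lemma e12_tmul (ρ : (V ⊗[k] V) →ₗ[k] (V ⊗[k] V)) (a b c : V) :
    e12 k V ρ (a ⊗ₜ[k] (b ⊗ₜ[k] c))
      = TensorProduct.assoc k V V V (ρ (a ⊗ₜ[k] b) ⊗ₜ[k] c) := by
  simp [e12]

lemma e13_tmul (ρ : (V ⊗[k] V) →ₗ[k] (V ⊗[k] V)) (a b c : V) :
    e13 k V ρ (a ⊗ₜ[k] (b ⊗ₜ[k] c))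
      = TensorProduct.map LinearMap.id (tauV k V)
          (TensorProduct.assoc k V V V (ρ (a ⊗ₜ[k] c) ⊗ₜ[k] b)) := by
  simp [e13, tauV, e12]

/-- T1: `D(a, -) ⊗ id` applied to `y` equals `R¹²(a ⊗ y)`. -/
lemma T1_eq (R : (V ⊗[k] V) →ₗ[k] (V ⊗[k] V)) (a : V) (y : V ⊗[k] V) :
    applyLeft k V (TensorProduct.curry R) a y = e12 k V R (a ⊗ₜ[k] y) := by
  induction y using TensorProduct.induction_on with
  | zero => simp
  | tmul s t => simp [applyLeft, e12]
  | add y1 y2 h1 h2 => simp [TensorProduct.tmul_add, h1, h2]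

lemma claimC (t : V) (w : V ⊗[k] V) :
    q13 k V (t ⊗ₜ[k] tauV k V w) = TensorProduct.assoc k V V V (w ⊗ₜ[k] t) := by
  induction w using TensorProduct.induction_on with
  | zero => simp
  | tmul s u => simp [q13, q12, q23, tauV]
  | add w1 w2 h1 h2 => simp [TensorProduct.tmul_add, TensorProduct.add_tmul, h1, h2]

lemma T2_eq {R : (V ⊗[k] V) →ₗ[k] (V ⊗[k] V)} (hR : SkewSymmetric k V R)
    (b : V) (y : V ⊗[k] V) :
    q13 k V (applyRight k V (TensorProduct.curry R) b (tauV k V y))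
      = - e12 k V R (TensorProduct.map LinearMap.id (tauV k V)
          (TensorProduct.assoc k V V V (y ⊗ₜ[k] b))) := by
  induction y using TensorProduct.induction_on with
  | zero => simp
  | tmul s t =>
      have hb : R (b ⊗ₜ[k] s) = -(tauV k V (R (s ⊗ₜ[k] b))) := by
        simpa [tau_tmul] using skew_apply k V hR (s ⊗ₜ[k] b)
      simp only [tau_tmul, applyRight, TensorProduct.map_tmul, LinearMap.id_coe, id_eq,
        TensorProduct.curry_apply, TensorProduct.assoc_tmul, hb, TensorProduct.tmul_neg,
        map_neg, claimC]
      rw [show s ⊗ₜ[k] (b ⊗ₜ[k] t) = (TensorProduct.assoc k V V V) ((s ⊗ₜ[k] b) ⊗ₜ[k] t) from rfl,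
        ← e12_tmul]
      simp [e12]
  | add y1 y2 h1 h2 =>
      simp only [map_add, TensorProduct.add_tmul, h1, h2]
      abel

lemma T4_eq {r : (V ⊗[k] V) →ₗ[k] (V ⊗[k] V)} (hr : SkewSymmetric k V r)
    (c : V) (z : V ⊗[k] V) :
    q23 k V (applyRight k V (TensorProduct.curry r) c z)
      = - e23 k V r (TensorProduct.assoc k V V V (z ⊗ₜ[k] c)) := by
  induction z using TensorProduct.induction_on with
  | zero => simp
  | tmul P Q =>
      have hc : r (c ⊗ₜ[k] Q) = -(tauV k V (r (Q ⊗ₜ[k] c))) := by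
        simpa [tau_tmul] using skew_apply k V hr (Q ⊗ₜ[k] c)
      simp [q23, applyRight, e23, hc, TensorProduct.tmul_neg, tau_tau]
  | add z1 z2 h1 h2 =>
      simp only [map_add, TensorProduct.add_tmul, h1, h2]
      abel

lemma claimE (Q : V) (w : V ⊗[k] V) :
    q132 k V (TensorProduct.assoc k V V V (tauV k V w ⊗ₜ[k] Q))
      = TensorProduct.map LinearMap.id (tauV k V)
          (TensorProduct.assoc k V V V (w ⊗ₜ[k] Q)) := by
  induction w using TensorProduct.induction_on with
  | zero => simp
  | tmul s t => simp [q132, tauV]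
  | add w1 w2 h1 h2 => simp [TensorProduct.add_tmul, h1, h2]

lemma T3_eq {r : (V ⊗[k] V) →ₗ[k] (V ⊗[k] V)} (hr : SkewSymmetric k V r)
    (c : V) (z : V ⊗[k] V) :
    q132 k V (applyLeft k V (TensorProduct.curry r) c z)
      = - e13 k V r (TensorProduct.assoc k V V V (z ⊗ₜ[k] c)) := by
  induction z using TensorProduct.induction_on with
  | zero => simp
  | tmul P Q =>
      have hc : r (c ⊗ₜ[k] P) = -(tauV k V (r (P ⊗ₜ[k] c))) := by
        simpa [tau_tmul] using skew_apply k V hr (P ⊗ₜ[k] c)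
      simp only [applyLeft, LinearMap.comp_apply, TensorProduct.map_tmul,
        LinearMap.id_coe, id_eq, TensorProduct.curry_apply, LinearEquiv.coe_coe,
        TensorProduct.assoc_tmul, hc, TensorProduct.neg_tmul, map_neg]
      rw [e13_tmul, claimE]
  | add z1 z2 h1 h2 =>
      simp only [map_add, TensorProduct.add_tmul, h1, h2]
      abel

end Aux


/-- For skew-symmetric `R, r : V⊗V → V⊗V` and the brackets `D_id(a,b) = r(a⊗b)`,
`D₍₁₂₎(a,b) = R(a⊗b)`, the cross-Jacobi sum `T1+T2+T3+T4` equals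
`[R¹², r¹³ + r²³](a⊗b⊗c)`; in particular it vanishes identically iff `[R¹², r¹³+r²³] = 0`. -/
theorem cross_jacobi_sum_eq_commutator
    (k : Type*) [Field k] [CharZero k]
    (V : Type*) [AddCommGroup V] [Module k V]
    (R r : (V ⊗[k] V) →ₗ[k] (V ⊗[k] V))
    (hRskew : SkewSymmetric k V R) (hrskew : SkewSymmetric k V r) :
    (∀ a b c : V,
      applyLeft k V (TensorProduct.curry R) a (r (b ⊗ₜ[k] c))
        + q13 k V (applyRight k V (TensorProduct.curry R) b (r (c ⊗ₜ[k] a)))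
        + q132 k V (applyLeft k V (TensorProduct.curry r) c (R (a ⊗ₜ[k] b)))
        + q23 k V (applyRight k V (TensorProduct.curry r) c (R (a ⊗ₜ[k] b)))
      = (e12 k V R ∘ₗ (e13 k V r + e23 k V r)
          - (e13 k V r + e23 k V r) ∘ₗ e12 k V R) (a ⊗ₜ[k] (b ⊗ₜ[k] c))) ∧
    ((∀ a b c : V,
      applyLeft k V (TensorProduct.curry R) a (r (b ⊗ₜ[k] c))
        + q13 k V (applyRight k V (TensorProduct.curry R) b (r (c ⊗ₜ[k] a)))
        + q132 k V (applyLeft k V (TensorProduct.curry r) c (R (a ⊗ₜ[k] b)))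
        + q23 k V (applyRight k V (TensorProduct.curry r) c (R (a ⊗ₜ[k] b))) = 0)
      ↔ e12 k V R ∘ₗ (e13 k V r + e23 k V r)
          - (e13 k V r + e23 k V r) ∘ₗ e12 k V R = 0) := by
  have key : ∀ a b c : V,
      applyLeft k V (TensorProduct.curry R) a (r (b ⊗ₜ[k] c))
        + q13 k V (applyRight k V (TensorProduct.curry R) b (r (c ⊗ₜ[k] a)))
        + q132 k V (applyLeft k V (TensorProduct.curry r) c (R (a ⊗ₜ[k] b)))
        + q23 k V (applyRight k V (TensorProduct.curry r) c (R (a ⊗ₜ[k] b)))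
      = (e12 k V R ∘ₗ (e13 k V r + e23 k V r)
          - (e13 k V r + e23 k V r) ∘ₗ e12 k V R) (a ⊗ₜ[k] (b ⊗ₜ[k] c)) := by
    intro a b c
    have hca : r (c ⊗ₜ[k] a) = -(tauV k V (r (a ⊗ₜ[k] c))) := by
      simpa [tau_tmul] using skew_apply k V hrskew (a ⊗ₜ[k] c)
    rw [T1_eq, ← e23_tmul, hca, map_neg, map_neg, T2_eq k V hRskew, neg_neg, ← e13_tmul,
      T3_eq k V hrskew, T4_eq k V hrskew, ← e12_tmul]
    simp only [LinearMap.sub_apply, LinearMap.comp_apply, LinearMap.add_apply, map_add]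
    abel
  refine ⟨key, ?_, ?_⟩
  · intro h
    apply TensorProduct.ext'
    intro a y
    induction y using TensorProduct.induction_on with
    | zero => simp
    | tmul b c =>
        rw [LinearMap.zero_apply, ← key a b c]
        exact h a b c
    | add y1 y2 h1 h2 =>
        simp only [LinearMap.zero_apply] at h1 h2 ⊢
        rw [TensorProduct.tmul_add, map_add, h1, h2, add_zero]
  · intro h a b c
    rw [key a b c, h, LinearMap.zero_apply]
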